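/- Let A be a finite type, M an additive commutative monoid, and w : A → M such that the induced weight homomorphism is infinite-dimensional: for every N ∈ ℕ there exists n ∈ ℕ such that there are at least N distinct values c ∈ M for which the φ-weight class {x : Fin n → A | ∑ i, w(x i) = c} has at least two elements. Then for every finite family g₁, …, g_N of φ-conservative gates, where gᵢ is a φ-conservative permutation of (Fin mᵢ → A), there exist n ∈ ℕ and a φ-conservative permutation f of (Fin n → A) that does not belong to the subgroup of Perm(Fin n → A) generated by the applications of the gates gᵢ along injections Fin mᵢ ↪ Fin n. In words: the φ-conservative revital is not finitely generated when φ is infinite-dimensional. -/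

import Mathlib

/-- Extension of an operation on `m`-letter words to `n`-letter words along an
injection of coordinates: apply `F` on the coordinates selected by `ι`, leave
the rest unchanged. -/
noncomputable def extWord {A : Type*} {m n : ℕ} (ι : Fin m ↪ Fin n)
    (F : (Fin m → A) → (Fin m → A)) (x : Fin n → A) : Fin n → A :=
  fun k => if h : ∃ j, ι j = k then F (x ∘ ι) h.choose else x k

theorem extWord_comp {A : Type*} {m n : ℕ} (ι : Fin m ↪ Fin n)
    (F : (Fin m → A) → (Fin m → A)) (x : Fin n → A) :
    (extWord ι F x) ∘ ι = F (x ∘ ι) := by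
  funext j
  have h : ∃ j', ι j' = ι j := ⟨j, rfl⟩
  simp only [Function.comp_apply, extWord, dif_pos h]
  congr 1
  exact ι.injective h.choose_spec

/-- The application of a gate `f` of arity `m` along an injection `ι : Fin m ↪ Fin n`:
the resulting permutation `g` of words of length `n` satisfies
`(g x) (ι j) = (f (x ∘ ι)) j` for all `j : Fin m`, and `g x k = x k` for every
coordinate `k` outside the range of `ι`. -/
noncomputable def applyAlong {A : Type*} {m n : ℕ} (f : Equiv.Perm (Fin m → A))
    (ι : Fin m ↪ Fin n) : Equiv.Perm (Fin n → A) where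
  toFun := extWord ι f
  invFun := extWord ι f.symm
  left_inv x := by
    funext k
    by_cases h : ∃ j, ι j = k
    · obtain ⟨j, rfl⟩ := h
      have hj : extWord ι (⇑f.symm) (extWord ι (⇑f) x) (ι j)
          = ((extWord ι (⇑f.symm) (extWord ι (⇑f) x)) ∘ ι) j := rfl
      rw [hj, extWord_comp, extWord_comp]
      simp
    · simp only [extWord, dif_neg h]
  right_inv x := by
    funext k
    by_cases h : ∃ j, ι j = k
    · obtain ⟨j, rfl⟩ := h
      have hj : extWord ι (⇑f) (extWord ι (⇑f.symm) x) (ι j)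
          = ((extWord ι (⇑f) (extWord ι (⇑f.symm) x)) ∘ ι) j := rfl
      rw [hj, extWord_comp, extWord_comp]
      simp
    · simp only [extWord, dif_neg h]

/-- The φ-weight of a word `x : Fin n → A` with respect to a symbol weighting
`w : A → M` into an additive commutative monoid. -/
def phiWeight {A M : Type*} [AddCommMonoid M] (w : A → M) {n : ℕ}
    (x : Fin n → A) : M :=
  ∑ i, w (x i)

/-- A permutation of words is *φ-conservative* if it preserves the φ-weight of every
word. -/
def IsPhiConservative {A M : Type*} [AddCommMonoid M] (w : A → M) {n : ℕ}
    (f : Equiv.Perm (Fin n → A)) : Prop :=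
  ∀ x : Fin n → A, phiWeight w (f x) = phiWeight w x


section RevitalAux

set_option linter.unusedSectionVars false

variable {A : Type*} [Fintype A] [DecidableEq A] {M : Type*} [AddCommMonoid M]

namespace RevAux

theorem exists_perm_comp {m n : ℕ} (ι ι' : Fin m ↪ Fin n) :
    ∃ π : Equiv.Perm (Fin n), ∀ j, π (ι j) = ι' j := by
  classical
  have hcard : Fintype.card ((Set.range ι)ᶜ : Set (Fin n)) =
      Fintype.card ((Set.range ι')ᶜ : Set (Fin n)) := by
    rw [Fintype.card_compl_set, Fintype.card_compl_set,
      Set.card_range_of_injective ι.injective, Set.card_range_of_injective ι'.injective]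
  let e : (Set.range ι : Set (Fin n)) ≃ Set.range ι' :=
    (Equiv.ofInjective ι ι.injective).symm.trans (Equiv.ofInjective ι' ι'.injective)
  let c := Fintype.equivOfCardEq hcard
  refine ⟨(Equiv.Set.sumCompl (Set.range ι)).symm.trans ((e.sumCongr c).trans
     (Equiv.Set.sumCompl (Set.range ι'))), fun j => ?_⟩
  simp only [Equiv.trans_apply]
  rw [Equiv.Set.sumCompl_symm_apply_of_mem (Set.mem_range_self j)]
  have h1 : e ⟨ι j, Set.mem_range_self j⟩ = ⟨ι' j, Set.mem_range_self j⟩ := by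
    show (Equiv.ofInjective ι' ι'.injective) ((Equiv.ofInjective ι ι.injective).symm
      ⟨ι j, Set.mem_range_self j⟩) = _
    have : (⟨ι j, Set.mem_range_self j⟩ : Set.range ι) = Equiv.ofInjective ι ι.injective j :=
      rfl
    rw [this, Equiv.symm_apply_apply]
    rfl
  rw [Equiv.sumCongr_apply, Sum.map_inl, h1]
  rfl

theorem extWord_reindex {m n : ℕ} (F : (Fin m → A) → (Fin m → A))
    (ι ι' : Fin m ↪ Fin n) (π : Equiv.Perm (Fin n)) (hπ : ∀ j, π (ι j) = ι' j)
    (x : Fin n → A) (k : Fin n) :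
    extWord ι' F x k = extWord ι F (x ∘ π) (π.symm k) := by
  by_cases h : ∃ j, ι' j = k
  · obtain ⟨j, rfl⟩ := h
    have h2 : π.symm (ι' j) = ι j := by rw [← hπ, Equiv.symm_apply_apply]
    rw [h2]
    have e1 : extWord ι' F x (ι' j) = F (x ∘ ι') j := congrFun (extWord_comp ι' F x) j
    have e2 : extWord ι F (x ∘ π) (ι j) = F ((x ∘ π) ∘ ι) j :=
      congrFun (extWord_comp ι F (x ∘ π)) j
    rw [e1, e2]
    congr 1
    funext j'
    simp [Function.comp, hπ j']
  · have h' : ¬ ∃ j, ι j = π.symm k := by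
      rintro ⟨j, hj⟩
      exact h ⟨j, by rw [← hπ j, hj, Equiv.apply_symm_apply]⟩
    rw [extWord, extWord]
    simp only [dif_neg h, dif_neg h']
    simp [Function.comp]

theorem phiWeight_extWord {m n : ℕ} (w : A → M) (ι : Fin m ↪ Fin n)
    (F : (Fin m → A) → (Fin m → A))
    (hF : ∀ z : Fin m → A, phiWeight w (F z) = phiWeight w z) (x : Fin n → A) :
    phiWeight w (extWord ι F x) = phiWeight w x := by
  classical
  have split : ∀ y : Fin n → A, phiWeight w y =
      (∑ j : Fin m, w (y (ι j))) + ∑ k ∈ (Finset.univ.image ι)ᶜ, w (y k) := by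
    intro y
    rw [phiWeight, ← Finset.sum_add_sum_compl (Finset.univ.image ι) (fun k => w (y k))]
    congr 1
    rw [Finset.sum_image (fun a _ b _ h => ι.injective h)]
  rw [split, split x]
  congr 1
  · have key : ∀ j, extWord ι F x (ι j) = F (x ∘ ι) j :=
      fun j => congrFun (extWord_comp ι F x) j
    calc (∑ j : Fin m, w (extWord ι F x (ι j))) = ∑ j, w (F (x ∘ ι) j) :=
          Finset.sum_congr rfl fun j _ => by rw [key]
      _ = phiWeight w (F (x ∘ ι)) := rfl
      _ = phiWeight w (x ∘ ι) := hF _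
      _ = ∑ j : Fin m, w (x (ι j)) := rfl
  · refine Finset.sum_congr rfl fun k hk => ?_
    have : ¬ ∃ j, ι j = k := by
      simp only [Finset.mem_compl, Finset.mem_image, Finset.mem_univ, true_and] at hk
      rintro ⟨j, hj⟩; exact hk ⟨j, hj⟩
    rw [extWord, dif_neg this]

theorem isPhiConservative_applyAlong (w : A → M) {m n : ℕ}
    (g : Equiv.Perm (Fin m → A)) (hg : IsPhiConservative w g) (ι : Fin m ↪ Fin n) :
    IsPhiConservative w (applyAlong g ι) :=
  fun x => phiWeight_extWord w ι (⇑g) hg x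

def conservGroup (w : A → M) (n : ℕ) : Subgroup (Equiv.Perm (Fin n → A)) where
  carrier := {f | IsPhiConservative w f}
  one_mem' := fun _ => rfl
  mul_mem' := fun {f g} hf hg x => by
    have h1 : (f * g) x = f (g x) := rfl
    rw [h1, hf, hg]
  inv_mem' := fun {f} hf x => by
    have := (hf (f⁻¹ x)).symm
    rwa [← Equiv.Perm.mul_apply, mul_inv_cancel, Equiv.Perm.one_apply] at this

noncomputable def fintypeClass (w : A → M) (n : ℕ) (c : M) :
    Fintype {x : Fin n → A // phiWeight w x = c} := Fintype.ofFinite _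

noncomputable def decClass (w : A → M) (n : ℕ) (c : M) :
    DecidableEq {x : Fin n → A // phiWeight w x = c} := Classical.decEq _

theorem class_iff {w : A → M} {n : ℕ} {c : M} (f : conservGroup w n) (x : Fin n → A) :
    phiWeight w x = c ↔ phiWeight w ((f : Equiv.Perm (Fin n → A)) x) = c := by
  rw [f.2 x]

noncomputable def signAt (w : A → M) (n : ℕ) (c : M) : conservGroup w n →* ℤˣ :=
  MonoidHom.mk' (fun f =>
    @Equiv.Perm.sign _ (decClass w n c) (fintypeClass w n c)
      ((f : Equiv.Perm (Fin n → A)).subtypePerm (fun x => (class_iff f x).symm)))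
  (by
    intro f g
    rw [← map_mul]
    congr 1)

theorem signAt_conj (w : A → M) (n : ℕ) (c : M) (a b : conservGroup w n) :
    signAt w n c (a * b * a⁻¹) = signAt w n c b := by
  rw [map_mul, map_mul, map_inv, mul_comm (signAt w n c a) (signAt w n c b),
    mul_inv_cancel_right]

theorem signAt_swap_self (w : A → M) (n : ℕ) (c : M) {x y : Fin n → A}
    (hxy : x ≠ y) (hx : phiWeight w x = c) (hy : phiWeight w y = c)
    (hmem : Equiv.swap x y ∈ conservGroup w n) :
    signAt w n c (⟨Equiv.swap x y, hmem⟩ : conservGroup w n) = -1 := by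
  letI := decClass w n c
  letI := fintypeClass w n c
  have key : (Equiv.swap x y).subtypePerm
      (fun z => (class_iff (⟨Equiv.swap x y, hmem⟩ : conservGroup w n) z).symm) =
      Equiv.swap (⟨x, hx⟩ : {z : Fin n → A // phiWeight w z = c}) ⟨y, hy⟩ := by
    apply Equiv.ext
    intro z
    apply Subtype.ext
    simp only [Equiv.Perm.subtypePerm_apply]
    rcases eq_or_ne (z : Fin n → A) x with hzx | hzx
    · have : z = ⟨x, hx⟩ := Subtype.ext hzx
      rw [this]
      simp [Equiv.swap_apply_left]
    · rcases eq_or_ne (z : Fin n → A) y with hzy | hzy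
      · have : z = ⟨y, hy⟩ := Subtype.ext hzy
        rw [this]
        simp [Equiv.swap_apply_right]
      · rw [Equiv.swap_apply_of_ne_of_ne hzx hzy,
          Equiv.swap_apply_of_ne_of_ne (fun h => hzx (congrArg Subtype.val h))
            (fun h => hzy (congrArg Subtype.val h))]
  show (@Equiv.Perm.sign _ (decClass w n c) (fintypeClass w n c)) _ = -1
  rw [key]
  exact Equiv.Perm.sign_swap (fun h => hxy (congrArg Subtype.val h))

theorem signAt_swap_other (w : A → M) (n : ℕ) (c c' : M) {x y : Fin n → A}
    (hcc' : c ≠ c') (hx : phiWeight w x = c') (hy : phiWeight w y = c')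
    (hmem : Equiv.swap x y ∈ conservGroup w n) :
    signAt w n c (⟨Equiv.swap x y, hmem⟩ : conservGroup w n) = 1 := by
  have key : (Equiv.swap x y).subtypePerm (p := fun z => phiWeight w z = c)
      (fun z => (class_iff (c := c) (⟨Equiv.swap x y, hmem⟩ : conservGroup w n) z).symm) = 1 := by
    apply Equiv.ext
    intro z
    apply Subtype.ext
    simp only [Equiv.Perm.subtypePerm_apply]
    have hzx : (z : Fin n → A) ≠ x := fun h => hcc' (by rw [← z.2, h, hx])
    have hzy : (z : Fin n → A) ≠ y := fun h => hcc' (by rw [← z.2, h, hy])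
    rw [Equiv.swap_apply_of_ne_of_ne hzx hzy]
    rfl
  show (@Equiv.Perm.sign _ (decClass w n c) (fintypeClass w n c)) _ = 1
  rw [key]
  exact map_one _

def reindexPerm (A : Type*) {n : ℕ} (π : Equiv.Perm (Fin n)) :
    Equiv.Perm (Fin n → A) := Equiv.arrowCongr π (Equiv.refl A)

theorem reindexPerm_mem (w : A → M) (n : ℕ) (π : Equiv.Perm (Fin n)) :
    reindexPerm A π ∈ conservGroup w n := by
  intro x
  show (∑ i, w ((reindexPerm A π x) i)) = ∑ i, w (x i)
  have h1 : ∀ i, (reindexPerm A π x) i = x (π.symm i) := fun _ => rfl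
  calc (∑ i, w ((reindexPerm A π x) i)) = ∑ i, w (x (π.symm i)) :=
        Finset.sum_congr rfl fun i _ => by rw [h1]
    _ = ∑ i, w (x i) := Equiv.sum_comp π.symm (fun i => w (x i))

theorem applyAlong_conj {m n : ℕ} (g : Equiv.Perm (Fin m → A)) (ι ι' : Fin m ↪ Fin n)
    (π : Equiv.Perm (Fin n)) (hπ : ∀ j, π (ι j) = ι' j) :
    applyAlong g ι' = reindexPerm A π * applyAlong g ι * (reindexPerm A π)⁻¹ := by
  apply Equiv.ext
  intro x
  funext k
  have h1 : (reindexPerm A π * applyAlong g ι * (reindexPerm A π)⁻¹) x k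
      = extWord ι (⇑g) (x ∘ π) (π.symm k) := rfl
  have h0 : applyAlong g ι' x k = extWord ι' (⇑g) x k := rfl
  rw [h0, h1]
  exact extWord_reindex (⇑g) ι ι' π hπ x k

theorem signAt_applyAlong (w : A → M) (n : ℕ) (c : M) {m : ℕ}
    (g : Equiv.Perm (Fin m → A)) (hg : IsPhiConservative w g)
    (ι ι' : Fin m ↪ Fin n) :
    signAt w n c ⟨applyAlong g ι, isPhiConservative_applyAlong w g hg ι⟩ =
      signAt w n c ⟨applyAlong g ι', isPhiConservative_applyAlong w g hg ι'⟩ := by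
  obtain ⟨π, hπ⟩ := exists_perm_comp ι' ι
  have hconj := applyAlong_conj g ι' ι π hπ
  have hmemu := reindexPerm_mem w n π
  have heq : (⟨applyAlong g ι, isPhiConservative_applyAlong w g hg ι⟩ : conservGroup w n)
      = ⟨reindexPerm A π, hmemu⟩ *
        ⟨applyAlong g ι', isPhiConservative_applyAlong w g hg ι'⟩ *
        (⟨reindexPerm A π, hmemu⟩ : conservGroup w n)⁻¹ := Subtype.ext hconj
  rw [heq, signAt_conj]

end RevAux

end RevitalAux

/-- **For infinite-dimensional weights, the φ-conservative revital is not finitely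
generated** (Theorem 18 of the paper).  Let `A` be a finite type, `M` an additive
commutative monoid and `w : A → M` such that the induced weight is
*infinite-dimensional*: for every `N` there is an `n` such that at least `N` distinct
values `c : M` have a φ-weight class `{x : Fin n → A | ∑ i, w (x i) = c}` with at least
two elements.  Then for every finite family `g i` (for `i : Fin N`) of φ-conservative
gates, where `g i` is a φ-conservative permutation of `Fin (m i) → A`, there are
`n : ℕ` and a φ-conservative permutation `f` of `Fin n → A` not lying in the subgroup
of `Perm (Fin n → A)` generated by the applications of the gates `g i` along injections
`Fin (m i) ↪ Fin n`. -/
theorem phiConservative_not_finitely_generated_of_infiniteDimensional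
    {A : Type*} [Fintype A] [DecidableEq A] {M : Type*} [AddCommMonoid M]
    (w : A → M)
    (hdim : ∀ N : ℕ, ∃ (n : ℕ) (s : Finset M), N ≤ s.card ∧
      ∀ c ∈ s, ∃ x y : Fin n → A, x ≠ y ∧
        phiWeight w x = c ∧ phiWeight w y = c)
    (N : ℕ) (m : Fin N → ℕ) (g : ∀ i : Fin N, Equiv.Perm (Fin (m i) → A))
    (hg : ∀ i : Fin N, IsPhiConservative w (g i)) :
    ∃ (n : ℕ) (f : Equiv.Perm (Fin n → A)), IsPhiConservative w f ∧
      f ∉ Subgroup.closure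
        {σ : Equiv.Perm (Fin n → A) |
          ∃ (i : Fin N) (ι : Fin (m i) ↪ Fin n), σ = applyAlong (g i) ι} := by
  classical
  obtain ⟨n, s, hcard, hs⟩ := hdim (N + 1)
  obtain ⟨t, hts, htc⟩ := Finset.exists_subset_card_eq hcard
  let e : t ≃ Fin (N + 1) := t.equivFinOfCardEq htc
  let c : Fin (N + 1) → M := fun k => ((e.symm k : t) : M)
  have hcinj : Function.Injective c := fun k k' h =>
    e.symm.injective (Subtype.ext h)
  have hcs : ∀ k, c k ∈ s := fun k => hts (e.symm k).2
  choose X Y hXY hWX hWY using fun k => hs (c k) (hcs k)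
  set H := RevAux.conservGroup w n with hH
  have swap_mem : ∀ k, Equiv.swap (X k) (Y k) ∈ H := by
    intro k z
    rcases eq_or_ne z (X k) with rfl | hzx
    · rw [Equiv.swap_apply_left, hWY, hWX]
    · rcases eq_or_ne z (Y k) with rfl | hzy
      · rw [Equiv.swap_apply_right, hWX, hWY]
      · rw [Equiv.swap_apply_of_ne_of_ne hzx hzy]
  let Ψ : H →* (Fin (N + 1) → ℤˣ) := Pi.monoidHom (fun k => RevAux.signAt w n (c k))
  let V : Fin N → (Fin (N + 1) → ℤˣ) := fun i =>
    if h : Nonempty (Fin (m i) ↪ Fin n) then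
      Ψ ⟨applyAlong (g i) h.some,
        RevAux.isPhiConservative_applyAlong w (g i) (hg i) h.some⟩
    else 1
  let hFun : Finset (Fin N) → (Fin (N + 1) → ℤˣ) := fun tt => ∏ i ∈ tt, V i
  have husq : ∀ u : ℤˣ, u * u = 1 := Int.units_mul_self
  have hsq : ∀ a : Fin (N + 1) → ℤˣ, a * a = 1 := fun a => funext fun k => husq (a k)
  have hmul : ∀ t₁ t₂ : Finset (Fin N), hFun t₁ * hFun t₂ = hFun (symmDiff t₁ t₂) := by
    intro t₁ t₂
    have d1 : Disjoint (t₁ \ t₂) (t₁ ∩ t₂) :=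
      disjoint_sdiff_self_left.mono_right Finset.inter_subset_right
    have d2 : Disjoint (t₂ \ t₁) (t₁ ∩ t₂) :=
      disjoint_sdiff_self_left.mono_right Finset.inter_subset_left
    have e1 : hFun t₁ = (∏ i ∈ t₁ \ t₂, V i) * ∏ i ∈ t₁ ∩ t₂, V i := by
      rw [← Finset.prod_union d1, Finset.sdiff_union_inter]
    have e2 : hFun t₂ = (∏ i ∈ t₂ \ t₁, V i) * ∏ i ∈ t₁ ∩ t₂, V i := by
      rw [← Finset.prod_union d2, Finset.inter_comm, Finset.sdiff_union_inter]
    have e3 : hFun (symmDiff t₁ t₂) = (∏ i ∈ t₁ \ t₂, V i) * ∏ i ∈ t₂ \ t₁, V i := by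
      show (∏ i ∈ symmDiff t₁ t₂, V i) = _
      rw [symmDiff_def, Finset.sup_eq_union, Finset.prod_union disjoint_sdiff_sdiff]
    have e4 : ((∏ i ∈ t₁ ∩ t₂, V i) : Fin (N + 1) → ℤˣ) * (∏ i ∈ t₁ ∩ t₂, V i) = 1 :=
      hsq _
    rw [e1, e2, e3, mul_mul_mul_comm, e4, mul_one]
  let R : Subgroup (Fin (N + 1) → ℤˣ) :=
  { carrier := Set.range hFun
    one_mem' := ⟨∅, Finset.prod_empty⟩
    mul_mem' := by
      rintro _ _ ⟨t₁, rfl⟩ ⟨t₂, rfl⟩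
      exact ⟨symmDiff t₁ t₂, (hmul t₁ t₂).symm⟩
    inv_mem' := by
      rintro _ ⟨t₁, rfl⟩
      exact ⟨t₁, (inv_eq_of_mul_eq_one_right (hsq (hFun t₁))).symm⟩ }
  have hnotsurj : ¬ Function.Surjective hFun := by
    intro hsurj
    have hle := Fintype.card_le_of_surjective hFun hsurj
    rw [Fintype.card_finset, Fintype.card_fin] at hle
    have hG : Fintype.card (Fin (N + 1) → ℤˣ) = 2 ^ (N + 1) := by
      rw [Fintype.card_fun, Fintype.card_units_int, Fintype.card_fin]
    rw [hG] at hle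
    exact absurd hle (by
      have : (2 : ℕ) ^ N < 2 ^ (N + 1) := Nat.pow_lt_pow_right (by norm_num) (Nat.lt_succ_self N)
      omega)
  obtain ⟨u, hu⟩ := not_forall.mp hnotsurj
  let T : Finset (Fin (N + 1)) := Finset.univ.filter (fun k => u k ≠ 1)
  let sw : Fin (N + 1) → H := fun k => (⟨Equiv.swap (X k) (Y k), swap_mem k⟩ : H)
  have hcommT : ∀ k l : Fin (N + 1), k ≠ l → Commute (sw k) (sw l) := by
    intro k l hkl
    have hdisj : (Equiv.swap (X k) (Y k)).Disjoint (Equiv.swap (X l) (Y l)) := by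
      intro z
      by_cases hz : z = X k ∨ z = Y k
      · right
        have wz : phiWeight w z = c k := by
          rcases hz with rfl | rfl
          exacts [hWX k, hWY k]
        apply Equiv.swap_apply_of_ne_of_ne
        · rintro rfl
          exact hkl (hcinj (by rw [← wz, hWX l]))
        · rintro rfl
          exact hkl (hcinj (by rw [← wz, hWY l]))
      · left
        push_neg at hz
        exact Equiv.swap_apply_of_ne_of_ne hz.1 hz.2
    exact Subtype.ext hdisj.commute.eq
  let FF : H := T.noncommProd sw (fun k _ l _ hkl => hcommT k l hkl)
  refine ⟨n, (FF : Equiv.Perm (Fin n → A)), FF.2, ?_⟩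
  intro hmemcl
  have hPsiF : Ψ FF = u := by
    funext k'
    have h1 : Ψ FF k' = ∏ k ∈ T, RevAux.signAt w n (c k') (sw k) := by
      show (RevAux.signAt w n (c k')) FF = _
      exact (Finset.map_noncommProd T sw _ (RevAux.signAt w n (c k'))).trans
        (Finset.noncommProd_eq_prod _ _)
    rw [h1]
    have hval : ∀ k ∈ T,
        RevAux.signAt w n (c k') (sw k)
          = if k = k' then -1 else 1 := by
      intro k _
      by_cases hk : k = k'
      · subst hk
        rw [if_pos rfl]
        exact RevAux.signAt_swap_self w n (c k) (hXY k) (hWX k) (hWY k) (swap_mem k)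
      · rw [if_neg hk]
        exact RevAux.signAt_swap_other w n (c k') (c k)
          (fun h => hk (hcinj h).symm) (hWX k) (hWY k) (swap_mem k)
    rw [Finset.prod_congr rfl hval, Finset.prod_ite_eq' T k' (fun _ => (-1 : ℤˣ))]
    by_cases hk' : k' ∈ T
    · rw [if_pos hk']
      rcases Int.units_eq_one_or (u k') with h | h
      · exact absurd h (by simpa [T] using hk')
      · rw [h]
    · rw [if_neg hk']
      have : ¬ u k' ≠ 1 := by simpa [T] using hk'
      rw [not_not.mp this]
  set Sset := {σ : Equiv.Perm (Fin n → A) |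
    ∃ (i : Fin N) (ι : Fin (m i) ↪ Fin n), σ = applyAlong (g i) ι} with hSset
  have hSH : Sset ⊆ (H : Set (Equiv.Perm (Fin n → A))) := by
    rintro σ ⟨i, ι, rfl⟩
    exact RevAux.isPhiConservative_applyAlong w (g i) (hg i) ι
  let S'' : Set H := (Subtype.val : H → Equiv.Perm (Fin n → A)) ⁻¹' Sset
  have himg : (Subtype.val : H → Equiv.Perm (Fin n → A)) '' S'' = Sset :=
    Set.image_preimage_eq_of_subset (by rw [Subtype.range_coe]; exact hSH)
  have hmap : Subgroup.map H.subtype (Subgroup.closure S'') = Subgroup.closure Sset := by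
    rw [MonoidHom.map_closure]
    have h2 : (⇑H.subtype) '' S'' = Sset := himg
    rw [h2]
  have hFFmem : FF ∈ Subgroup.closure S'' := by
    have hm : (FF : Equiv.Perm (Fin n → A)) ∈ Subgroup.map H.subtype (Subgroup.closure S'') := by
      rw [hmap]; exact hmemcl
    obtain ⟨y, hy, hy2⟩ := hm
    have : y = FF := Subtype.ext hy2
    rwa [this] at hy
  have hmem2 : Ψ FF ∈ Subgroup.map Ψ (Subgroup.closure S'') := ⟨FF, hFFmem, rfl⟩
  rw [MonoidHom.map_closure] at hmem2
  have hsub : Ψ '' S'' ⊆ (R : Set (Fin (N + 1) → ℤˣ)) := by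
    rintro _ ⟨σ, hσ, rfl⟩
    obtain ⟨i, ι, hι⟩ := hσ
    have hne : Nonempty (Fin (m i) ↪ Fin n) := ⟨ι⟩
    have hVi : Ψ σ = V i := by
      have hV : V i = Ψ ⟨applyAlong (g i) hne.some,
          RevAux.isPhiConservative_applyAlong w (g i) (hg i) hne.some⟩ := dif_pos hne
      rw [hV]
      have hσ' : σ = ⟨applyAlong (g i) ι,
          RevAux.isPhiConservative_applyAlong w (g i) (hg i) ι⟩ := Subtype.ext hι
      rw [hσ']
      funext k'
      exact RevAux.signAt_applyAlong w n (c k') (g i) (hg i) ι hne.some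
    rw [hVi]
    exact ⟨{i}, Finset.prod_singleton V i⟩
  have hR : Ψ FF ∈ R := (Subgroup.closure_le R).mpr hsub hmem2
  rw [hPsiF] at hR
  exact hu (by exact hR)
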